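/- Let (M,i) be an image-finite pointed modal transition system over a finite event set Act such that (M,i) ⊨ᵃ ψ for every formula ψ ∈ Φ. Then for every state s that is Rᶜ-reachable from i and every may-capable transition (s,α,s') ∈ Rᶜ, there exists a must-transition (s,α,s'') ∈ Rᵃ with (M,s'') ⪯ (M,s'). -/
import Mathlib


/-- A mixed transition system over event set `Act` with state set `σ`:
two transition relations `Ra` (asserted/must) and `Rc` (consistent/may). -/
structure MTS (Act σ : Type) where
  Ra : σ → Act → σ → Prop
  Rc : σ → Act → σ → Prop

namespace MTS

/-- `M` is a modal transition system iff `Ra ⊆ Rc`. -/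
def IsModal {Act σ : Type} (M : MTS Act σ) : Prop :=
  ∀ s α t, M.Ra s α t → M.Rc s α t

/-- `M` is image-finite. -/
def ImageFinite {Act σ : Type} (M : MTS Act σ) : Prop :=
  ∀ (s : σ) (α : Act), {t | M.Ra s α t}.Finite ∧ {t | M.Rc s α t}.Finite

end MTS

/-- A labelled transition system viewed as a mixed transition system `(Σ, R, R)`. -/
def LTS {Act σ : Type} (R : σ → Act → σ → Prop) : MTS Act σ := ⟨R, R⟩

/-- `Q` is a refinement from `M` to `N`. -/
def IsRefinement {Act σ τ : Type} (M : MTS Act σ) (N : MTS Act τ) (Q : σ → τ → Prop) : Prop :=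
  ∀ s t, Q s t → ∀ α : Act,
    (∀ s', M.Ra s α s' → ∃ t', N.Ra t α t' ∧ Q s' t') ∧
    (∀ t', N.Rc t α t' → ∃ s', M.Rc s α s' ∧ Q s' t')

/-- `(M,i) ⪯ (N,j)`: the pointed system `(N,j)` refines `(M,i)`. -/
def Refines {Act σ τ : Type} (M : MTS Act σ) (i : σ) (N : MTS Act τ) (j : τ) : Prop :=
  ∃ Q, IsRefinement M N Q ∧ Q i j

/-- Modes for the two judgments of the semantics: `a` (asserted), `c` (consistent). -/
inductive RMode where
  | a | c

/-- The dual mode: `¬a = c` and `¬c = a`. -/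
def RMode.negm : RMode → RMode
  | .a => .c
  | .c => .a

/-- The transition relation of mode `m`. -/
def MTS.R {Act σ : Type} (M : MTS Act σ) : RMode → σ → Act → σ → Prop
  | .a => M.Ra
  | .c => M.Rc

/-- Formulas of Hennessy–Milner logic over `Act`. -/
inductive HML (Act : Type) where
  | tt
  | neg (φ : HML Act)
  | dia (α : Act) (φ : HML Act)
  | and (φ ψ : HML Act)

/-- Larsen's semantics of Hennessy–Milner logic with two judgments `⊨ᵃ`, `⊨ᶜ`. -/
def Sat {Act σ : Type} (M : MTS Act σ) : HML Act → RMode → σ → Prop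
  | .tt, _, _ => True
  | .neg φ, m, s => ¬ Sat M φ m.negm s
  | .dia α φ, m, s => ∃ s', M.R m s α s' ∧ Sat M φ m s'
  | .and φ ψ, m, s => Sat M φ m s ∧ Sat M ψ m s

namespace HML

/-- `[α]φ = ¬⟨α⟩¬φ`. -/
def box {Act : Type} (α : Act) (φ : HML Act) : HML Act := .neg (.dia α (.neg φ))

/-- `φ ∨ ψ = ¬(¬φ ∧ ¬ψ)`. -/
def orf {Act : Type} (φ ψ : HML Act) : HML Act := .neg (.and (.neg φ) (.neg ψ))

/-- Finite conjunction (empty conjunction is `tt`). -/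
def bigAnd {Act : Type} : List (HML Act) → HML Act
  | [] => .tt
  | φ :: l => .and φ (bigAnd l)

/-- Finite disjunction (empty disjunction is `¬tt`). -/
def bigOr {Act : Type} : List (HML Act) → HML Act
  | [] => .neg .tt
  | φ :: l => orf φ (bigOr l)

/-- Modal depth of an HML formula. -/
def depth {Act : Type} : HML Act → ℕ
  | .tt => 0
  | .neg φ => φ.depth
  | .dia _ φ => 1 + φ.depth
  | .and φ ψ => max φ.depth ψ.depth

end HML

/-- Terms of the process algebra MPA. -/
inductive MPA (Act : Type) where
  | zero
  | bot
  | prefMust (α : Act) (p : MPA Act)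
  | prefMay (α : Act) (p : MPA Act)
  | plus (p q : MPA Act)

namespace MPA

variable {Act : Type} [DecidableEq Act]

/-- Must-successors of an MPA term for event `β` (structural operational semantics). -/
def must : MPA Act → Act → List (MPA Act)
  | .zero, _ => []
  | .bot, _ => []
  | .prefMust α p, β => if β = α then [p] else []
  | .prefMay _ _, _ => []
  | .plus p q, β => p.must β ++ q.must β

/-- All (must or may) successors of an MPA term for event `β`. -/
def may : MPA Act → Act → List (MPA Act)
  | .zero, _ => []
  | .bot, _ => [.bot]
  | .prefMust α p, β => if β = α then [p] else []
  | .prefMay α p, β => if β = α then [p] else []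
  | .plus p q, β => p.may β ++ q.may β

/-- The modal transition system `⟦·⟧` given by the structural operational semantics of MPA:
`Ra` is the set of must-transitions, `Rc` the set of all transitions. -/
def mts : MTS Act (MPA Act) :=
  ⟨fun p α q => q ∈ p.must α, fun p α q => q ∈ p.may α⟩

theorem sizeOf_lt_of_mem_must :
    ∀ (t : MPA Act) (α : Act) (r : MPA Act), r ∈ t.must α → sizeOf r < sizeOf t := by
  intro t
  induction t with
  | zero => intro α r h; simp [must] at h
  | bot => intro α r h; simp [must] at h
  | prefMust β p ih =>
      intro α r h
      simp only [must] at h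
      split at h <;> simp_all
  | prefMay β p ih => intro α r h; simp [must] at h
  | plus p q ihp ihq =>
      intro α r h
      simp only [must, List.mem_append] at h
      rcases h with h | h
      · have := ihp α r h; simp; omega
      · have := ihq α r h; simp; omega

theorem sizeOf_le_of_mem_may :
    ∀ (t : MPA Act) (α : Act) (r : MPA Act), r ∈ t.may α → sizeOf r ≤ sizeOf t := by
  intro t
  induction t with
  | zero => intro α r h; simp [may] at h
  | bot => intro α r h; simp [may] at h; simp [h]
  | prefMust β p ih =>
      intro α r h
      simp only [may] at h
      split at h <;> simp_all
  | prefMay β p ih =>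
      intro α r h
      simp only [may] at h
      split at h <;> simp_all
  | plus p q ihp ihq =>
      intro α r h
      simp only [may, List.mem_append] at h
      rcases h with h | h
      · have := ihp α r h; simp; omega
      · have := ihq α r h; simp; omega

theorem sizeOf_lt_plus_of_mem_may (p q : MPA Act) (α : Act) (r : MPA Act)
    (h : r ∈ (MPA.plus p q).may α) : sizeOf r < sizeOf (MPA.plus p q) := by
  simp only [may, List.mem_append] at h
  rcases h with h | h
  · have := sizeOf_le_of_mem_may p α r h; simp; omega
  · have := sizeOf_le_of_mem_may q α r h; simp; omega

end MPA

/-- The characteristic Hennessy–Milner formula `φ_p` of an MPA term `p`. -/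
noncomputable def charForm {Act : Type} [Fintype Act] [DecidableEq Act] : MPA Act → HML Act
  | .zero =>
      .bigAnd (((Finset.univ : Finset Act).toList).map fun α => .neg (.dia α .tt))
  | .bot => .tt
  | .prefMust α p =>
      .and (.dia α (charForm p)) (.and (HML.box α (charForm p))
        (.bigAnd ((((Finset.univ : Finset Act).toList).filter (fun β => β ≠ α)).map
          fun β => .neg (.dia β .tt))))
  | .prefMay α p =>
      .and (HML.box α (charForm p))
        (.bigAnd ((((Finset.univ : Finset Act).toList).filter (fun β => β ≠ α)).map
          fun β => .neg (.dia β .tt)))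
  | .plus p q =>
      .and
        (.bigAnd (((Finset.univ : Finset Act).toList).flatMap fun α =>
          ((MPA.plus p q).must α).attach.map fun r => HML.dia α (charForm r.1)))
        (.bigAnd (((Finset.univ : Finset Act).toList).map fun α =>
          HML.box α (.bigOr (((MPA.plus p q).may α).attach.map fun r => charForm r.1))))
decreasing_by
  all_goals first
    | exact MPA.sizeOf_lt_of_mem_must _ _ _ r.2
    | exact MPA.sizeOf_lt_plus_of_mem_may _ _ _ _ r.2
    | (simp; omega)
    | simp

/-- The formula `ψ_{w,α,p} = [δ₁]…[δₙ](⟨α⟩φ_p ∨ ¬⟨α⟩φ_p)`; the set `Φ` consists of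
all such formulas. -/
noncomputable def psiForm {Act : Type} [Fintype Act] [DecidableEq Act]
    (w : List Act) (α : Act) (p : MPA Act) : HML Act :=
  w.foldr (fun δ φ => HML.box δ φ)
    (HML.orf (.dia α (charForm p)) (.neg (.dia α (charForm p))))

/-- `Rᶜ`-reachability in a mixed transition system. -/
def MTS.ReachC {Act σ : Type} (M : MTS Act σ) : σ → σ → Prop :=
  Relation.ReflTransGen (fun s t => ∃ α, M.Rc s α t)

section Aux
variable {Act σ : Type} [Fintype Act] [DecidableEq Act]

@[simp] lemma RMode.negm_negm : ∀ m : RMode, m.negm.negm = m := by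
  intro m; cases m <;> rfl

lemma sat_orf (M : MTS Act σ) (φ ψ : HML Act) (m : RMode) (s : σ) :
    Sat M (HML.orf φ ψ) m s ↔ Sat M φ m s ∨ Sat M ψ m s := by
  simp only [HML.orf, Sat, RMode.negm_negm]; tauto

lemma sat_box (M : MTS Act σ) (α : Act) (φ : HML Act) (m : RMode) (s : σ) :
    Sat M (HML.box α φ) m s ↔ ∀ t, M.R m.negm s α t → Sat M φ m t := by
  simp only [HML.box, Sat, RMode.negm_negm]; push_neg; rfl

lemma sat_bigAnd (M : MTS Act σ) (l : List (HML Act)) (m : RMode) (s : σ) :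
    Sat M (HML.bigAnd l) m s ↔ ∀ φ ∈ l, Sat M φ m s := by
  induction l with
  | nil => simp [HML.bigAnd, Sat]
  | cons φ l ih => simp [HML.bigAnd, Sat, ih]

lemma sat_bigOr (M : MTS Act σ) (l : List (HML Act)) (m : RMode) (s : σ) :
    Sat M (HML.bigOr l) m s ↔ ∃ φ ∈ l, Sat M φ m s := by
  induction l with
  | nil => simp [HML.bigOr, Sat]
  | cons φ l ih => simp [HML.bigOr, sat_orf, ih]

end Aux

section Chi
variable {Act σ : Type} [Fintype Act] [DecidableEq Act]

def bigPlus : List (MPA Act) → MPA Act := fun l => l.foldr .plus .zero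

@[simp] lemma must_bigPlus (l : List (MPA Act)) (β : Act) :
    (bigPlus l).must β = l.flatMap (·.must β) := by
  induction l with
  | nil => simp [bigPlus, MPA.must]
  | cons p l ih => simp [bigPlus, MPA.must] at *; simp [ih]

@[simp] lemma may_bigPlus (l : List (MPA Act)) (β : Act) :
    (bigPlus l).may β = l.flatMap (·.may β) := by
  induction l with
  | nil => simp [bigPlus, MPA.may]
  | cons p l ih => simp [bigPlus, MPA.may] at *; simp [ih]

noncomputable def chi (M : MTS Act σ) (hMf : M.ImageFinite) : ℕ → σ → MPA Act
  | 0, _ => .bot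
  | n+1, t => .plus .zero (bigPlus ((Finset.univ : Finset Act).toList.flatMap fun β =>
      ((hMf t β).1.toFinset.toList.map fun t' => .prefMust β (chi M hMf n t')) ++
      ((hMf t β).2.toFinset.toList.map fun t' => .prefMay β (chi M hMf n t'))))

lemma must_chi (M : MTS Act σ) (hMf : M.ImageFinite) (n : ℕ) (t : σ) (β : Act)
    (r : MPA Act) :
    r ∈ (chi M hMf (n+1) t).must β ↔ ∃ t', M.Ra t β t' ∧ r = chi M hMf n t' := by
  simp only [chi, MPA.must, must_bigPlus, List.mem_append, List.mem_flatMap,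
    List.mem_map, List.nil_append]
  constructor
  · rintro ⟨p, ⟨γ, -, hp⟩, hr⟩
    rcases hp with ⟨t', ht', rfl⟩ | ⟨t', ht', rfl⟩
    · simp only [MPA.must] at hr
      split at hr
      next hbg =>
        simp at hr; subst hr; subst hbg
        exact ⟨t', (Set.Finite.mem_toFinset _).mp (Finset.mem_toList.mp ht'), rfl⟩
      next => simp at hr
    · simp [MPA.must] at hr
  · rintro ⟨t', ht', rfl⟩
    refine ⟨.prefMust β (chi M hMf n t'), ⟨β, by simp, Or.inl ⟨t', ?_, rfl⟩⟩, by simp [MPA.must]⟩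
    simp [Set.Finite.mem_toFinset]; exact ht'

lemma may_chi (M : MTS Act σ) (hM : M.IsModal) (hMf : M.ImageFinite) (n : ℕ) (t : σ)
    (β : Act) (r : MPA Act) :
    r ∈ (chi M hMf (n+1) t).may β ↔ ∃ t', M.Rc t β t' ∧ r = chi M hMf n t' := by
  simp only [chi, MPA.may, may_bigPlus, List.mem_append, List.mem_flatMap,
    List.mem_map, List.nil_append]
  constructor
  · rintro ⟨p, ⟨γ, -, hp⟩, hr⟩
    rcases hp with ⟨t', ht', rfl⟩ | ⟨t', ht', rfl⟩
    · simp only [MPA.may] at hr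
      split at hr
      next hbg =>
        simp at hr; subst hr; subst hbg
        exact ⟨t', hM _ _ _ ((Set.Finite.mem_toFinset _).mp (Finset.mem_toList.mp ht')), rfl⟩
      next => simp at hr
    · simp only [MPA.may] at hr
      split at hr
      next hbg =>
        simp at hr; subst hr; subst hbg
        exact ⟨t', (Set.Finite.mem_toFinset _).mp (Finset.mem_toList.mp ht'), rfl⟩
      next => simp at hr
  · rintro ⟨t', ht', rfl⟩
    refine ⟨.prefMay β (chi M hMf n t'), ⟨β, by simp, Or.inr ⟨t', ?_, rfl⟩⟩, by simp [MPA.may]⟩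
    exact Finset.mem_toList.mpr ((Set.Finite.mem_toFinset _).mpr ht')

/-- Semantics of the characteristic formula of a `plus` term, in either mode. -/
lemma sat_charForm_plus (M : MTS Act σ) (p q : MPA Act) (m : RMode) (v : σ) :
    Sat M (charForm (.plus p q)) m v ↔
      (∀ α : Act, ∀ r ∈ (MPA.plus p q).must α,
        ∃ v', M.R m v α v' ∧ Sat M (charForm r) m v') ∧
      (∀ α : Act, ∀ v', M.R m.negm v α v' →
        ∃ r ∈ (MPA.plus p q).may α, Sat M (charForm r) m v') := by
  rw [charForm]
  simp only [Sat, sat_bigAnd, List.mem_flatMap, List.mem_map, List.mem_attach,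
    true_and, Finset.mem_toList, Finset.mem_univ]
  constructor
  · rintro ⟨h1, h2⟩
    refine ⟨fun α r hr => ?_, fun α v' hv' => ?_⟩
    · have := h1 _ ⟨α, ⟨r, hr⟩, rfl⟩
      simpa only [Sat] using this
    · have h3 := h2 _ ⟨α, rfl⟩
      rw [sat_box] at h3
      have h4 := h3 v' hv'
      rw [sat_bigOr] at h4
      rcases h4 with ⟨φ, hφm, hφ⟩
      simp only [List.mem_map, List.mem_attach, true_and] at hφm
      rcases hφm with ⟨⟨r, hr⟩, rfl⟩
      exact ⟨r, hr, hφ⟩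
  · rintro ⟨h1, h2⟩
    constructor
    · rintro φ ⟨α, ⟨r, hr⟩, rfl⟩
      obtain ⟨v', hv', hsat⟩ := h1 α r hr
      exact ⟨v', hv', hsat⟩
    · rintro φ ⟨α, rfl⟩
      rw [sat_box]
      intro v' hv'
      rw [sat_bigOr]
      obtain ⟨r, hr, hsat⟩ := h2 α v' hv'
      exact ⟨charForm r, List.mem_map.mpr ⟨⟨r, hr⟩, List.mem_attach _ _, rfl⟩, hsat⟩
end Chi

section Rel
variable {Act σ : Type} [Fintype Act] [DecidableEq Act]

/-- Depth-`n` refinement approximation: musts of `t` matched by musts of `v`,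
mays of `v` matched by mays of `t`. -/
def Dep (M : MTS Act σ) : ℕ → σ → σ → Prop
  | 0, _, _ => True
  | n+1, t, v => ∀ α : Act,
      (∀ t', M.Ra t α t' → ∃ v', M.Ra v α v' ∧ Dep M n t' v') ∧
      (∀ v', M.Rc v α v' → ∃ t', M.Rc t α t' ∧ Dep M n t' v')

/-- Depth-`n` consistency: musts of either side matched by mays of the other. -/
def ConS (M : MTS Act σ) : ℕ → σ → σ → Prop
  | 0, _, _ => True
  | n+1, t, v => ∀ α : Act,
      (∀ t', M.Ra t α t' → ∃ v', M.Rc v α v' ∧ ConS M n t' v') ∧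
      (∀ v', M.Ra v α v' → ∃ t', M.Rc t α t' ∧ ConS M n t' v')

variable {M : MTS Act σ}

lemma dep_anti : ∀ n t v, Dep M (n+1) t v → Dep M n t v := by
  intro n
  induction n with
  | zero => intro t v _; trivial
  | succ k ih =>
    intro t v h α
    refine ⟨fun t' ht' => ?_, fun v' hv' => ?_⟩
    · obtain ⟨v', hv', hd⟩ := (h α).1 t' ht'; exact ⟨v', hv', ih _ _ hd⟩
    · obtain ⟨t', ht', hd⟩ := (h α).2 v' hv'; exact ⟨t', ht', ih _ _ hd⟩

lemma conS_anti : ∀ n t v, ConS M (n+1) t v → ConS M n t v := by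
  intro n
  induction n with
  | zero => intro t v _; trivial
  | succ k ih =>
    intro t v h α
    refine ⟨fun t' ht' => ?_, fun v' hv' => ?_⟩
    · obtain ⟨v', hv', hd⟩ := (h α).1 t' ht'; exact ⟨v', hv', ih _ _ hd⟩
    · obtain ⟨t', ht', hd⟩ := (h α).2 v' hv'; exact ⟨t', ht', ih _ _ hd⟩

lemma dep_le {m n : ℕ} (hle : m ≤ n) {t v : σ} (h : Dep M n t v) : Dep M m t v := by
  induction n with
  | zero => cases Nat.le_zero.mp hle; exact h
  | succ k ih =>
    rcases Nat.lt_or_ge m (k+1) with hlt | hge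
    · exact ih (Nat.lt_succ_iff.mp hlt) (dep_anti _ _ _ h)
    · cases Nat.le_antisymm hle hge; exact h

lemma conS_le {m n : ℕ} (hle : m ≤ n) {t v : σ} (h : ConS M n t v) : ConS M m t v := by
  induction n with
  | zero => cases Nat.le_zero.mp hle; exact h
  | succ k ih =>
    rcases Nat.lt_or_ge m (k+1) with hlt | hge
    · exact ih (Nat.lt_succ_iff.mp hlt) (conS_anti _ _ _ h)
    · cases Nat.le_antisymm hle hge; exact h

lemma conS_refl (hM : M.IsModal) : ∀ n t, ConS M n t t := by
  intro n
  induction n with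
  | zero => intro t; trivial
  | succ k ih =>
    intro t α
    exact ⟨fun t' ht' => ⟨t', hM _ _ _ ht', ih t'⟩, fun t' ht' => ⟨t', hM _ _ _ ht', ih t'⟩⟩

lemma conS_symm : ∀ n t v, ConS M n t v → ConS M n v t := by
  intro n
  induction n with
  | zero => intro t v _; trivial
  | succ k ih =>
    intro t v h α
    refine ⟨fun v' hv' => ?_, fun t' ht' => ?_⟩
    · obtain ⟨t', ht', hd⟩ := (h α).2 v' hv'; exact ⟨t', ht', ih _ _ hd⟩
    · obtain ⟨v', hv', hd⟩ := (h α).1 t' ht'; exact ⟨v', hv', ih _ _ hd⟩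

lemma dep_con (hM : M.IsModal) : ∀ n t v, Dep M n t v → ConS M n t v := by
  intro n
  induction n with
  | zero => intro t v _; trivial
  | succ k ih =>
    intro t v h α
    refine ⟨fun t' ht' => ?_, fun v' hv' => ?_⟩
    · obtain ⟨v', hv', hd⟩ := (h α).1 t' ht'; exact ⟨v', hM _ _ _ hv', ih _ _ hd⟩
    · obtain ⟨t', ht', hd⟩ := (h α).2 v' (hM _ _ _ hv'); exact ⟨t', ht', ih _ _ hd⟩

lemma dep_conS_trans : ∀ n a b c, Dep M n a b → ConS M n b c → ConS M n a c := by
  intro n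
  induction n with
  | zero => intro a b c _ _; trivial
  | succ k ih =>
    intro a b c hd hc α
    refine ⟨fun a' ha' => ?_, fun c' hc' => ?_⟩
    · obtain ⟨b', hb', hd'⟩ := (hd α).1 a' ha'
      obtain ⟨c', hc', hc''⟩ := (hc α).1 b' hb'
      exact ⟨c', hc', ih _ _ _ hd' hc''⟩
    · obtain ⟨b', hb', hc''⟩ := (hc α).2 c' hc'
      obtain ⟨a', ha', hd'⟩ := (hd α).2 b' hb'
      exact ⟨a', ha', ih _ _ _ hd' hc''⟩

/-- `L1`: satisfying the characteristic formula of `chi n t` in mode `a` implies `Dep n`. -/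
lemma sat_chi_a_dep (hM : M.IsModal) (hMf : M.ImageFinite) :
    ∀ n t v, Sat M (charForm (chi M hMf n t)) .a v → Dep M n t v := by
  intro n
  induction n with
  | zero => intro t v _; trivial
  | succ k ih =>
    intro t v h
    rw [show chi M hMf (k+1) t = .plus .zero (bigPlus _) from rfl, sat_charForm_plus] at h
    obtain ⟨h1, h2⟩ := h
    intro α
    constructor
    · intro t' ht'
      obtain ⟨v', hv', hsat⟩ := h1 α (chi M hMf k t')
        ((must_chi M hMf k t α _).mpr ⟨t', ht', rfl⟩)
      exact ⟨v', hv', ih _ _ hsat⟩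
    · intro v' hv'
      obtain ⟨r, hr, hsat⟩ := h2 α v' hv'
      obtain ⟨t', ht', rfl⟩ := (may_chi M hM hMf k t α r).mp hr
      exact ⟨t', ht', ih _ _ hsat⟩

/-- `L2`: `ConS n` implies satisfying the characteristic formula of `chi n t` in mode `c`. -/
lemma conS_sat_chi_c (hM : M.IsModal) (hMf : M.ImageFinite) :
    ∀ n t v, ConS M n t v → Sat M (charForm (chi M hMf n t)) .c v := by
  intro n
  induction n with
  | zero => intro t v _; rw [show chi M hMf 0 t = .bot from rfl, charForm]; trivial
  | succ k ih =>
    intro t v h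
    rw [show chi M hMf (k+1) t = .plus .zero (bigPlus _) from rfl, sat_charForm_plus]
    constructor
    · intro α r hr
      obtain ⟨t', ht', rfl⟩ := (must_chi M hMf k t α r).mp hr
      obtain ⟨v', hv', hc⟩ := (h α).1 t' ht'
      exact ⟨v', hv', ih _ _ hc⟩
    · intro α v' hv'
      obtain ⟨t', ht', hc⟩ := (h α).2 v' hv'
      exact ⟨chi M hMf k t', (may_chi M hM hMf k t α _).mpr ⟨t', ht', rfl⟩, ih _ _ hc⟩

end Rel

section Main
variable {Act σ : Type} [Fintype Act] [DecidableEq Act]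

lemma pigeon {σ' : Type} {S : Set σ'} (hS : S.Finite) (D : ℕ → σ' → Prop)
    (hle : ∀ m n x, m ≤ n → D n x → D m x)
    (hex : ∀ n, ∃ x ∈ S, D n x) : ∃ x ∈ S, ∀ n, D n x := by
  classical
  by_contra hcon
  push_neg at hcon
  choose f hf using hcon
  set N := hS.toFinset.attach.sup (fun x => f x.1 (hS.mem_toFinset.mp x.2)) with hN
  obtain ⟨x, hxS, hD⟩ := hex N
  have hfle : f x hxS ≤ N := by
    have hmem : (⟨x, hS.mem_toFinset.mpr hxS⟩ : {y // y ∈ hS.toFinset}) ∈ hS.toFinset.attach :=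
      Finset.mem_attach _ _
    have := Finset.le_sup (f := fun y : {y // y ∈ hS.toFinset} => f y.1 (hS.mem_toFinset.mp y.2))
      hmem
    simpa using this
  exact hf x hxS (hle _ _ _ hfle hD)

lemma sat_of_reach (M : MTS Act σ) (i : σ) : ∀ s, M.ReachC i s → ∀ φ : HML Act,
    (∀ w : List Act, Sat M (w.foldr (fun δ ψ => HML.box δ ψ) φ) .a i) → Sat M φ .a s := by
  intro s hs
  induction hs with
  | refl => intro φ hφ; simpa using hφ []
  | tail hab hbc ih =>
    intro φ hφ
    obtain ⟨δ, hδ⟩ := hbc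
    have hbox := ih (HML.box δ φ) (fun w => by
      have := hφ (w ++ [δ])
      rwa [List.foldr_append] at this)
    rw [sat_box] at hbox
    exact hbox _ hδ

lemma star_disj (M : MTS Act σ) (i : σ)
    (h : ∀ (w : List Act) (α : Act) (p : MPA Act), Sat M (psiForm w α p) .a i)
    (u : σ) (hu : M.ReachC i u) (β : Act) (p : MPA Act) :
    (∃ u'', M.Ra u β u'' ∧ Sat M (charForm p) .a u'') ∨
      (∀ x, M.Rc u β x → ¬ Sat M (charForm p) .c x) := by
  have hsat := sat_of_reach M i u hu
    (HML.orf (.dia β (charForm p)) (.neg (.dia β (charForm p)))) (fun w => h w β p)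
  rw [sat_orf] at hsat
  rcases hsat with h1 | h2
  · exact Or.inl h1
  · right
    intro x hx hxsat
    exact h2 ⟨x, hx, hxsat⟩

lemma key_lemma (M : MTS Act σ) (hM : M.IsModal) (hMf : M.ImageFinite) (i : σ)
    (h : ∀ (w : List Act) (α : Act) (p : MPA Act), Sat M (psiForm w α p) .a i)
    (u : σ) (hu : M.ReachC i u) (β : Act) (w : σ)
    (htrig : ∀ n, ∃ x, M.Rc u β x ∧ ConS M n w x) :
    ∃ u'', M.Ra u β u'' ∧ ∀ n, Dep M n w u'' := by
  have hex : ∀ n, ∃ x ∈ {y | M.Ra u β y}, Dep M n w x := by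
    intro n
    rcases star_disj M i h u hu β (chi M hMf n w) with ⟨u'', hra, hsat⟩ | h2
    · exact ⟨u'', hra, sat_chi_a_dep hM hMf n w u'' hsat⟩
    · obtain ⟨x, hx, hcon⟩ := htrig n
      exact absurd (conS_sat_chi_c hM hMf n w x hcon) (h2 x hx)
  obtain ⟨x, hx, hD⟩ := pigeon (hMf u β).1 (fun n y => Dep M n w y)
    (fun m n y hmn hd => dep_le hmn hd) hex
  exact ⟨x, hx, hD⟩

end Main

/-- If the image-finite `(M,i)` satisfies every formula of `Φ` in mode
`a`, then every may-capable transition `(s,α,s') ∈ Rᶜ` from an `Rᶜ`-reachable state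
`s` is matched by a must-transition `(s,α,s'') ∈ Rᵃ` with `(M,s'') ⪯ (M,s')`. -/
theorem may_matched_by_must_of_psiForms {Act σ : Type} [Fintype Act] [DecidableEq Act]
    (M : MTS Act σ) (hM : M.IsModal) (hMf : M.ImageFinite) (i : σ)
    (h : ∀ (w : List Act) (α : Act) (p : MPA Act), Sat M (psiForm w α p) .a i)
    (s : σ) (hs : M.ReachC i s) (α : Act) (s' : σ) (hc : M.Rc s α s') :
    ∃ s'', M.Ra s α s'' ∧ Refines M s'' M s' := by
  classical
  -- the candidate refinement relation
  set Q : σ → σ → Prop := fun v u => M.ReachC i v ∧ M.ReachC i u ∧ ∀ n, ConS M n u v with hQ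
  have hreach : ∀ {u x : σ} {β : Act}, M.ReachC i u → M.Rc u β x → M.ReachC i x :=
    fun hu hx => Relation.ReflTransGen.tail hu ⟨_, hx⟩
  have hrefQ : IsRefinement M M Q := by
    rintro v u ⟨hv, hu, hcon⟩ β
    constructor
    · -- musts of v matched by musts of u
      intro v' hv'
      have htrig : ∀ n, ∃ x, M.Rc u β x ∧ ConS M n v' x := by
        intro n
        obtain ⟨x, hx, hcx⟩ := (hcon (n+1) β).2 v' hv'
        exact ⟨x, hx, conS_symm n _ _ hcx⟩
      obtain ⟨u'', hu'', hdep⟩ := key_lemma M hM hMf i h u hu β v' htrig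
      refine ⟨u'', hu'', hreach hv (hM _ _ _ hv'), hreach hu (hM _ _ _ hu''), fun n => ?_⟩
      exact conS_symm n _ _ (dep_con hM n _ _ (hdep n))
    · -- mays of u matched by mays of v
      intro u' hu'
      have htrig : ∀ n, ∃ x, M.Rc u β x ∧ ConS M n u' x :=
        fun n => ⟨u', hu', conS_refl hM n u'⟩
      obtain ⟨u'', hu'', hdep⟩ := key_lemma M hM hMf i h u hu β u' htrig
      have hex : ∀ n, ∃ y ∈ {y | M.Rc v β y}, ConS M n u'' y := by
        intro n
        obtain ⟨y, hy, hcy⟩ := (hcon (n+1) β).1 u'' hu''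
        exact ⟨y, hy, hcy⟩
      obtain ⟨v', hv', hcv⟩ := pigeon (hMf v β).2 (fun n y => ConS M n u'' y)
        (fun m n y hmn hd => conS_le hmn hd) hex
      refine ⟨v', hv', hreach hv hv', hreach hu hu', fun n => ?_⟩
      exact dep_conS_trans n _ _ _ (hdep n) (hcv n)
  -- construct s''
  have htrig0 : ∀ n, ∃ x, M.Rc s α x ∧ ConS M n s' x :=
    fun n => ⟨s', hc, conS_refl hM n s'⟩
  obtain ⟨s'', hs'', hdep⟩ := key_lemma M hM hMf i h s hs α s' htrig0
  exact ⟨s'', hs'', Q, hrefQ,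
    hreach hs (hM _ _ _ hs''), hreach hs hc, fun n => dep_con hM n _ _ (hdep n)⟩
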